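/- Let G be a graph and σ an LDFS umbrella-free ordering of V(G). Let P = (P₁, uᵢ) be a normal path of G(i,j) whose last vertex is uᵢ. Then P₁ is a normal path of G(i+1,j). -/

import Mathlib

def UmbrellaFree {V : Type*} [LinearOrder V] (G : SimpleGraph V) : Prop :=
  ∀ x y z : V, x < y → y < z → G.Adj x z → G.Adj x y ∨ G.Adj y z

def LDFSOrdering {V : Type*} [LinearOrder V] (G : SimpleGraph V) : Prop :=
  ∀ a b c : V, a < b → b < c → G.Adj a c → ¬ G.Adj a b →
    ∃ d : V, a < d ∧ d < b ∧ G.Adj d b ∧ ¬ G.Adj d c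

/-- A (simple) path of `G`, as a list of distinct vertices with consecutive vertices
adjacent. -/
def IsPathList {V : Type*} (G : SimpleGraph V) (P : List V) : Prop :=
  P.Nodup ∧ P.Chain' G.Adj

/-- `P = (v₁, v₂, …)` is typical (w.r.t. the ordering σ given by the linear order on `V`):
`v₁` is the rightmost vertex of `V(P)` in σ, and `v₂` is the rightmost vertex of
`N(v₁) ∩ V(P)` in σ. -/
def TypicalPath {V : Type*} [LinearOrder V] (G : SimpleGraph V) : List V → Prop
  | [] => True
  | [_] => True
  | v1 :: v2 :: rest =>
      (∀ v ∈ v1 :: v2 :: rest, v ≤ v1) ∧ (∀ v ∈ v2 :: rest, G.Adj v1 v → v ≤ v2)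

/-- The "normality from each vertex on" condition: for any two consecutive vertices
`v_{i-1}, v_i` of the list, `v_i` is the rightmost vertex of
`N(v_{i-1}) ∩ {v_i, …, v_k}` in σ. -/
def NormalFrom {V : Type*} [LinearOrder V] (G : SimpleGraph V) : List V → Prop
  | [] => True
  | [_] => True
  | a :: b :: rest =>
      (∀ v ∈ b :: rest, G.Adj a v → v ≤ b) ∧ NormalFrom G (b :: rest)

/-- `P` is a normal path of `G` (w.r.t. σ): a typical path such that each `v_i` is the
rightmost vertex of `N(v_{i-1}) ∩ {v_i, …, v_k}` in σ. -/
def NormalPath {V : Type*} [LinearOrder V] (G : SimpleGraph V) (P : List V) : Prop :=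
  IsPathList G P ∧ (∀ h : P ≠ [], ∀ v ∈ P, v ≤ P.head h) ∧ NormalFrom G P

/-- The vertex set of `G(i,j)` (`0`-indexed), where `u_n` is the dummy isolated vertex. -/
def Gset {n : ℕ} (G : SimpleGraph (Fin (n + 1))) (i j : ℕ) : Set (Fin (n + 1)) :=
  {v | i ≤ (v : ℕ) ∧ (v : ℕ) ≤ j ∧ ∀ w : Fin (n + 1), (w : ℕ) = j + 1 → ¬ G.Adj v w}

/-- `P` is a normal path of the induced subgraph on the vertex set `S` (adjacency among
vertices of `P` in the induced subgraph coincides with adjacency in `G`). -/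
def NormalPathIn {V : Type*} [LinearOrder V] (G : SimpleGraph V) (S : Set V)
    (P : List V) : Prop :=
  (∀ v ∈ P, v ∈ S) ∧ NormalPath G P


lemma normalFrom_dropLast {V : Type*} [LinearOrder V] (G : SimpleGraph V) :
    ∀ (l : List V) (x : V), NormalFrom G (l ++ [x]) → NormalFrom G l
  | [], _, _ => trivial
  | [_], _, _ => trivial
  | a :: b :: rest, x, h => by
    obtain ⟨h1, h2⟩ := h
    exact ⟨fun v hv hadj => h1 v (by simp at hv ⊢; tauto) hadj,
      normalFrom_dropLast G (b :: rest) x h2⟩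

/-- If `P = (P₁, uᵢ)` is a normal path of `G(i,j)` with last vertex `uᵢ`, then `P₁` is a
normal path of `G(i+1,j)`. -/
theorem normal_path_drop_last {n : ℕ} (G : SimpleGraph (Fin (n + 1)))
    (hdummy : ∀ w, ¬ G.Adj (Fin.last n) w)
    (hUF : UmbrellaFree G) (hLDFS : LDFSOrdering G)
    (i j : ℕ) (hi : i < n) (hj : j < n)
    (P₁ : List (Fin (n + 1)))
    (h : NormalPathIn G (Gset G i j) (P₁ ++ [(⟨i, by omega⟩ : Fin (n + 1))])) :
    NormalPathIn G (Gset G (i + 1) j) P₁ := by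
  obtain ⟨hmem, ⟨hnodup, hchain⟩, hhead, hnf⟩ := h
  set u : Fin (n + 1) := ⟨i, by omega⟩ with hu
  have hunotin : u ∉ P₁ := by
    have := List.nodup_append'.mp hnodup
    intro hc
    exact this.2.2 hc (by simp)
  refine ⟨fun v hv => ?_, ⟨(List.nodup_append'.mp hnodup).1,
      (List.isChain_append.mp hchain).1⟩, fun hne v hv => ?_, normalFrom_dropLast G P₁ u hnf⟩
  · obtain ⟨h1, h2, h3⟩ := hmem v (by simp [hv])
    refine ⟨?_, h2, h3⟩
    rcases Nat.lt_or_ge i (v : ℕ) with hlt | hge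
    · omega
    · exfalso
      have : v = u := by
        apply Fin.ext
        simp only [hu]
        omega
      exact hunotin (this ▸ hv)
  · have hne' : P₁ ++ [u] ≠ [] := by simp
    have := hhead hne' v (by simp [hv])
    rwa [List.head_append_of_ne_nil hne] at this
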